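/- (Quantitative form of Theorem 2.1.) Under the propagator setup and the solution setup, assume S := sup_{t≥0} ‖U(t)‖ < ∞ and M := sup_{t≥0} ∫₀ᵗ ‖U(t)∘V(ξ)‖·α(ξ) dξ satisfies 0 < M < ∞. Let ε > 0 satisfy ε^{p−1}·M < 1/4, and assume ‖u₀‖·S < ε/4, ‖u₀‖ < ε, and β(t) ≤ ε·α(t)/(4M) for all t ≥ 0. Then ‖u(t)‖ ≤ ε for all t ∈ [0,T). -/

import Mathlib

open MeasureTheory Filter
open scoped ENNReal

theorem stmt3
    {X : Type*} [NormedAddCommGroup X] [NormedSpace ℝ X] [CompleteSpace X]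
    (B U V : ℝ → X →L[ℝ] X)
    (hB : Continuous B)
    (hU0 : U 0 = 1) (hV0 : V 0 = 1)
    (hVU : ∀ t, 0 ≤ t → (V t).comp (U t) = 1)
    (hUV : ∀ t, 0 ≤ t → (U t).comp (V t) = 1)
    (hUd : ∀ t, 0 ≤ t → HasDerivAt U ((B t).comp (U t)) t)
    (hVd : ∀ t, 0 ≤ t → HasDerivAt V (-((V t).comp (B t))) t)
    (p : ℝ) (hp : 1 < p)
    (α β : ℝ → ℝ) (hαc : Continuous α) (hβc : Continuous β)
    (hα0 : ∀ t, 0 ≤ α t) (hβ0 : ∀ t, 0 ≤ β t)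
    (T : ℝ≥0∞) (hT : 0 < T)
    (u G f : ℝ → X) (u₀ : X) (hu0 : u 0 = u₀)
    (hGc : ContinuousOn G {t : ℝ | 0 ≤ t ∧ ENNReal.ofReal t < T})
    (hfc : ContinuousOn f {t : ℝ | 0 ≤ t ∧ ENNReal.ofReal t < T})
    (hud : ∀ t, 0 ≤ t → ENNReal.ofReal t < T → HasDerivAt u (B t (u t) + G t + f t) t)
    (hGb : ∀ t, 0 ≤ t → ENNReal.ofReal t < T → ‖G t‖ ≤ α t * ‖u t‖ ^ p)
    (hfb : ∀ t, 0 ≤ t → ENNReal.ofReal t < T → ‖f t‖ ≤ β t)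
    (S M ε : ℝ)
    (hS : ∀ t, 0 ≤ t → ‖U t‖ ≤ S)
    (hM : ∀ t, 0 ≤ t → ∫ ξ in (0:ℝ)..t, ‖(U t).comp (V ξ)‖ * α ξ ≤ M)
    (hM0 : 0 < M)
    (hε : 0 < ε) (hεM : ε ^ (p - 1) * M < 1 / 4)
    (hu₀S : ‖u₀‖ * S < ε / 4) (hu₀ε : ‖u₀‖ < ε)
    (hβε : ∀ t, 0 ≤ t → β t ≤ ε * α t / (4 * M)) :
    ∀ t, 0 ≤ t → ENNReal.ofReal t < T → ‖u t‖ ≤ ε := by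
  have hVcont : ContinuousOn V (Set.Ici (0:ℝ)) := fun x hx =>
    ((hVd x hx).continuousAt).continuousWithinAt
  -- Duhamel formula
  have duh : ∀ t, 0 ≤ t → ENNReal.ofReal t < T →
      u t = U t u₀ + ∫ ξ in (0:ℝ)..t, ((U t).comp (V ξ)) (G ξ + f ξ) := by
    intro t ht htT
    have hsub : Set.Icc (0:ℝ) t ⊆ {s : ℝ | 0 ≤ s ∧ ENNReal.ofReal s < T} := fun x hx =>
      ⟨hx.1, lt_of_le_of_lt (ENNReal.ofReal_le_ofReal hx.2) htT⟩
    have hGfc : ContinuousOn (fun ξ => G ξ + f ξ) (Set.Icc (0:ℝ) t) := (hGc.add hfc).mono hsub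
    have hVc' : ContinuousOn V (Set.Icc (0:ℝ) t) := hVcont.mono fun x hx => hx.1
    have hint : IntervalIntegrable (fun ξ => (V ξ) (G ξ + f ξ)) volume 0 t :=
      (hVc'.clm_apply hGfc).intervalIntegrable_of_Icc ht
    have key : ∀ s ∈ Set.uIcc (0:ℝ) t,
        HasDerivAt (fun ξ => (V ξ) (u ξ)) ((V s) (G s + f s)) s := by
      intro s hs
      rw [Set.uIcc_of_le ht] at hs
      have h1 := hVd s hs.1
      have h2 := hud s hs.1 (lt_of_le_of_lt (ENNReal.ofReal_le_ofReal hs.2) htT)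
      have h3 := h1.clm_apply h2
      convert h3 using 1
      simp only [ContinuousLinearMap.neg_apply, ContinuousLinearMap.comp_apply, map_add]
      abel
    have ftc := intervalIntegral.integral_eq_sub_of_hasDerivAt key hint
    have hw : (V t) (u t) = u₀ + ∫ ξ in (0:ℝ)..t, (V ξ) (G ξ + f ξ) := by
      rw [ftc, hu0, hV0]
      simp
    have huV : (U t) ((V t) (u t)) = u t := by
      have h := hUV t ht
      calc (U t) ((V t) (u t)) = ((U t).comp (V t)) (u t) := rfl
        _ = u t := by rw [h]; rfl
    calc u t = (U t) ((V t) (u t)) := huV.symm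
      _ = (U t) (u₀ + ∫ ξ in (0:ℝ)..t, (V ξ) (G ξ + f ξ)) := by rw [hw]
      _ = U t u₀ + (U t) (∫ ξ in (0:ℝ)..t, (V ξ) (G ξ + f ξ)) := by rw [map_add]
      _ = U t u₀ + ∫ ξ in (0:ℝ)..t, ((U t).comp (V ξ)) (G ξ + f ξ) := by
          rw [← (U t).intervalIntegral_comp_comm hint]; rfl
  -- Key a priori bound
  have bound : ∀ t, 0 ≤ t → ENNReal.ofReal t < T →
      (∀ ξ, 0 ≤ ξ → ξ ≤ t → ‖u ξ‖ ≤ ε) → ‖u t‖ ≤ 3 / 4 * ε := by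
    intro t ht htT hsmall
    have hsub : Set.Icc (0:ℝ) t ⊆ {s : ℝ | 0 ≤ s ∧ ENNReal.ofReal s < T} := fun x hx =>
      ⟨hx.1, lt_of_le_of_lt (ENNReal.ofReal_le_ofReal hx.2) htT⟩
    set C : ℝ := ε ^ p + ε / (4 * M) with hCdef
    have hCnn : 0 ≤ C := add_nonneg (Real.rpow_nonneg hε.le p) (by positivity)
    have hUVc : ContinuousOn (fun ξ => ‖(U t).comp (V ξ)‖ * α ξ) (Set.Icc (0:ℝ) t) := by
      apply ContinuousOn.mul _ hαc.continuousOn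
      exact (((ContinuousLinearMap.compL ℝ X X X (U t)).continuous.comp_continuousOn
        (hVcont.mono fun x hx => hx.1))).norm
    have hintg : IntervalIntegrable (fun ξ => C * (‖(U t).comp (V ξ)‖ * α ξ)) volume 0 t :=
      (continuousOn_const.mul hUVc).intervalIntegrable_of_Icc ht
    have hptwise : ∀ ξ ∈ Set.uIoc (0:ℝ) t,
        ‖((U t).comp (V ξ)) (G ξ + f ξ)‖ ≤ C * (‖(U t).comp (V ξ)‖ * α ξ) := by
      intro ξ hξ
      rw [Set.uIoc_of_le ht] at hξ
      have hξ0 : 0 ≤ ξ := hξ.1.le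
      have hξT : ENNReal.ofReal ξ < T := lt_of_le_of_lt (ENNReal.ofReal_le_ofReal hξ.2) htT
      have hup : ‖u ξ‖ ^ p ≤ ε ^ p :=
        Real.rpow_le_rpow (norm_nonneg _) (hsmall ξ hξ0 hξ.2) (by linarith)
      have hGf : ‖G ξ + f ξ‖ ≤ C * α ξ := by
        calc ‖G ξ + f ξ‖ ≤ ‖G ξ‖ + ‖f ξ‖ := norm_add_le _ _
          _ ≤ α ξ * ‖u ξ‖ ^ p + β ξ := add_le_add (hGb ξ hξ0 hξT) (hfb ξ hξ0 hξT)
          _ ≤ α ξ * ε ^ p + ε * α ξ / (4 * M) :=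
              add_le_add (mul_le_mul_of_nonneg_left hup (hα0 ξ)) (hβε ξ hξ0)
          _ = C * α ξ := by rw [hCdef]; field_simp
      calc ‖((U t).comp (V ξ)) (G ξ + f ξ)‖
          ≤ ‖(U t).comp (V ξ)‖ * ‖G ξ + f ξ‖ := ContinuousLinearMap.le_opNorm _ _
        _ ≤ ‖(U t).comp (V ξ)‖ * (C * α ξ) :=
            mul_le_mul_of_nonneg_left hGf (norm_nonneg _)
        _ = C * (‖(U t).comp (V ξ)‖ * α ξ) := by ring
    have hnormint : ‖∫ ξ in (0:ℝ)..t, ((U t).comp (V ξ)) (G ξ + f ξ)‖ ≤ C * M := by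
      have h1 := intervalIntegral.norm_integral_le_abs_of_norm_le
        (μ := volume) (a := (0:ℝ)) (b := t)
        (f := fun ξ => ((U t).comp (V ξ)) (G ξ + f ξ))
        (g := fun ξ => C * (‖(U t).comp (V ξ)‖ * α ξ))
        (ae_restrict_of_forall_mem measurableSet_uIoc hptwise) hintg
      have h2 : ∫ ξ in (0:ℝ)..t, C * (‖(U t).comp (V ξ)‖ * α ξ) ≤ C * M := by
        rw [intervalIntegral.integral_const_mul]
        exact mul_le_mul_of_nonneg_left (hM t ht) hCnn
      calc ‖∫ ξ in (0:ℝ)..t, ((U t).comp (V ξ)) (G ξ + f ξ)‖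
          ≤ |∫ ξ in (0:ℝ)..t, C * (‖(U t).comp (V ξ)‖ * α ξ)| := h1
        _ = ∫ ξ in (0:ℝ)..t, C * (‖(U t).comp (V ξ)‖ * α ξ) := by
            rw [abs_of_nonneg]
            apply intervalIntegral.integral_nonneg ht
            intro x hx
            exact mul_nonneg hCnn (mul_nonneg (norm_nonneg _) (hα0 x))
        _ ≤ C * M := h2
    have hCM : C * M ≤ ε / 4 + ε / 4 := by
      have hrw : ε ^ p = ε ^ (p - 1) * ε := by
        rw [← Real.rpow_add_one hε.ne' (p - 1), sub_add_cancel]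
      have h1 : ε ^ p * M ≤ ε / 4 := by
        rw [hrw]
        have : ε ^ (p - 1) * ε * M = ε * (ε ^ (p - 1) * M) := by ring
        rw [this]
        calc ε * (ε ^ (p - 1) * M) ≤ ε * (1 / 4) :=
              mul_le_mul_of_nonneg_left hεM.le hε.le
          _ = ε / 4 := by ring
      have h2 : ε / (4 * M) * M = ε / 4 := by field_simp
      calc C * M = ε ^ p * M + ε / (4 * M) * M := by rw [hCdef]; ring
        _ ≤ ε / 4 + ε / 4 := by rw [h2]; linarith
    have hfirst : ‖U t u₀‖ ≤ ε / 4 := by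
      calc ‖U t u₀‖ ≤ ‖U t‖ * ‖u₀‖ := ContinuousLinearMap.le_opNorm _ _
        _ ≤ S * ‖u₀‖ := mul_le_mul_of_nonneg_right (hS t ht) (norm_nonneg _)
        _ ≤ ε / 4 := by nlinarith [norm_nonneg u₀]
    calc ‖u t‖ = ‖U t u₀ + ∫ ξ in (0:ℝ)..t, ((U t).comp (V ξ)) (G ξ + f ξ)‖ := by
          rw [duh t ht htT]
      _ ≤ ‖U t u₀‖ + ‖∫ ξ in (0:ℝ)..t, ((U t).comp (V ξ)) (G ξ + f ξ)‖ := norm_add_le _ _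
      _ ≤ ε / 4 + C * M := add_le_add hfirst hnormint
      _ ≤ 3 / 4 * ε := by linarith
  -- Bootstrap
  intro t₀ ht₀ ht₀T
  by_contra hcon
  push_neg at hcon
  set s : Set ℝ := {x | 0 ≤ x ∧ ENNReal.ofReal x < T ∧ ε < ‖u x‖} with hsdef
  have hne : s.Nonempty := ⟨t₀, ht₀, ht₀T, hcon⟩
  have hbdd : BddBelow s := ⟨0, fun x hx => hx.1⟩
  set t₁ : ℝ := sInf s with ht₁def
  have ht₁0 : 0 ≤ t₁ := le_csInf hne fun x hx => hx.1
  have ht₁le : t₁ ≤ t₀ := csInf_le hbdd ⟨ht₀, ht₀T, hcon⟩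
  have ht₁T : ENNReal.ofReal t₁ < T :=
    lt_of_le_of_lt (ENNReal.ofReal_le_ofReal ht₁le) ht₀T
  have hcontu : ContinuousAt u t₁ := (hud t₁ ht₁0 ht₁T).continuousAt
  have hge : ε ≤ ‖u t₁‖ := by
    have hcl : t₁ ∈ closure s := csInf_mem_closure hne hbdd
    obtain ⟨seq, hseq, hlim⟩ := mem_closure_iff_seq_limit.1 hcl
    have htend : Tendsto (fun n => ‖u (seq n)‖) atTop (nhds ‖u t₁‖) :=
      (hcontu.tendsto.comp hlim).norm
    exact ge_of_tendsto htend (Eventually.of_forall fun n => (hseq n).2.2.le)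
  have hlt : ∀ ξ, 0 ≤ ξ → ξ < t₁ → ‖u ξ‖ ≤ ε := by
    intro ξ hξ hξt
    by_contra h
    push_neg at h
    have hmem : ξ ∈ s :=
      ⟨hξ, lt_of_le_of_lt (ENNReal.ofReal_le_ofReal hξt.le) ht₁T, h⟩
    exact absurd (csInf_le hbdd hmem) (not_le.2 hξt)
  have hle : ‖u t₁‖ ≤ ε := by
    rcases eq_or_lt_of_le ht₁0 with h0 | h0
    · rw [← h0, hu0]; exact hu₀ε.le
    · have htend : Tendsto (fun x => ‖u x‖) (nhdsWithin t₁ (Set.Iio t₁)) (nhds ‖u t₁‖) :=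
        (hcontu.tendsto.mono_left nhdsWithin_le_nhds).norm
      refine le_of_tendsto htend ?_
      filter_upwards [Ioo_mem_nhdsLT_of_mem (Set.mem_Ioc.2 ⟨h0, le_refl t₁⟩)] with x hx
      exact hlt x hx.1.le hx.2
  have hsmall : ∀ ξ, 0 ≤ ξ → ξ ≤ t₁ → ‖u ξ‖ ≤ ε := by
    intro ξ hξ hξt
    rcases lt_or_eq_of_le hξt with h | h
    · exact hlt ξ hξ h
    · rw [h]; exact hle
  have hfinal : ‖u t₁‖ ≤ 3 / 4 * ε := bound t₁ ht₁0 ht₁T hsmall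
  linarith
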